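/- Every derived vector d^r produced by Jean's recursion from an admissible word (starting d^1 = (1), d^2 = (1,1), and applying at each step G, S, or T according to the next letter, where the letter after a G is never T) is a non-decreasing sequence of positive integers beginning with 1. -/

import Mathlib

inductive Letter : Type
  | G | S | T
  deriving DecidableEq

def opG (α : List ℕ) : List ℕ := 1 :: α

def opS (α β : List ℕ) : List ℕ := 1 :: 1 :: List.zipWith (· + ·) α β.tail

def opT (α β : List ℕ) : List ℕ :=
  1 :: 1 :: List.zipWith (fun a b => 2*b - a) α β.tail

/-- One step of Jean's recursion: keep the last two derived vectors. -/
def step (p : List ℕ × List ℕ) : Letter → List ℕ × List ℕ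
  | Letter.G => (p.2, opG p.2)
  | Letter.S => (p.2, opS p.1 p.2)
  | Letter.T => (p.2, opT p.1 p.2)

structure JInv (α β : List ℕ) : Prop where
  hlen : β.length = α.length + 1
  hβpos : ∀ i, i < β.length → 0 < β.getD i 0
  hβmono : ∀ i, i + 1 < β.length → β.getD i 0 ≤ β.getD (i+1) 0
  hβhead : β.head? = some 1
  hαmono : ∀ i, i + 1 < α.length → α.getD i 0 ≤ α.getD (i+1) 0
  hdom : ∀ i, i < α.length → α.getD i 0 ≤ β.getD (i+1) 0
  hgap : ∀ i, i + 1 < α.length →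
    α.getD (i+1) 0 + β.getD (i+1) 0 ≤ α.getD i 0 + β.getD (i+2) 0

lemma head_eq_one {β : List ℕ} (h : β.head? = some 1) : β.getD 0 0 = 1 := by
  cases β with
  | nil => simp at h
  | cons a l => simp at h; simp [h]

lemma getD_zip (f : ℕ → ℕ → ℕ) (α β : List ℕ) (hlen : β.length = α.length + 1)
    (i : ℕ) (hi : i < α.length) :
    (List.zipWith f α β.tail).getD i 0 = f (α.getD i 0) (β.getD (i+1) 0) := by
  rw [List.getD_eq_getElem _ _ (by simp [List.length_zipWith, List.length_tail]; omega),
    List.getElem_zipWith,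
    List.getD_eq_getElem _ _ hi, List.getD_eq_getElem _ _ (by omega)]
  simp [List.getElem_tail]

lemma jinv_G {α β : List ℕ} (h : JInv α β) : JInv β (opG β) := by
  obtain ⟨hlen, hβpos, hβmono, hβhead, hαmono, hdom, hgap⟩ := h
  have hb0 := head_eq_one hβhead
  refine ⟨by simp [opG], ?_, ?_, by simp [opG], hβmono, ?_, ?_⟩
  · intro i hi
    simp only [opG, List.length_cons] at hi
    match i with
    | 0 => simp [opG]
    | n+1 =>
      simp only [opG, List.getD_cons_succ]
      exact hβpos n (by omega)
  · intro i hi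
    simp only [opG, List.length_cons] at hi
    match i with
    | 0 =>
      simp only [opG, List.getD_cons_zero, List.getD_cons_succ]
      have := hβpos 0 (by omega); omega
    | n+1 =>
      simp only [opG, List.getD_cons_succ]
      exact hβmono n (by omega)
  · intro i _
    simp only [opG, List.getD_cons_succ]
    exact le_rfl
  · intro i _
    simp only [opG, List.getD_cons_succ]
    omega

lemma jinv_S {α β : List ℕ} (h : JInv α β) : JInv β (opS α β) := by
  obtain ⟨hlen, hβpos, hβmono, hβhead, hαmono, hdom, hgap⟩ := h
  have hb0 := head_eq_one hβhead
  have hlenS : (opS α β).length = α.length + 2 := by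
    simp [opS, List.length_zipWith, List.length_tail]; omega
  have hget : ∀ i, i < α.length →
      (opS α β).getD (i+2) 0 = α.getD i 0 + β.getD (i+1) 0 := by
    intro i hi
    show (1 :: 1 :: List.zipWith (· + ·) α β.tail).getD (i+1+1) 0 = _
    rw [List.getD_cons_succ, List.getD_cons_succ, getD_zip _ _ _ hlen i hi]
  refine ⟨by omega, ?_, ?_, by simp [opS], hβmono, ?_, ?_⟩
  · intro i hi
    rw [hlenS] at hi
    match i with
    | 0 => simp [opS]
    | 1 => simp [opS]
    | n+2 =>
      rw [hget n (by omega)]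
      have := hβpos (n+1) (by omega); omega
  · intro i hi
    rw [hlenS] at hi
    match i with
    | 0 => simp [opS]
    | 1 =>
      have e := hget 0 (by omega)
      have b : (opS α β).getD (1+1) 0 = (opS α β).getD (0+2) 0 := by norm_num
      have h1 : (opS α β).getD 1 0 = 1 := by simp [opS]
      have b2 : β.getD (0+1) 0 = β.getD 1 0 := by norm_num
      have h2 := hβpos 1 (by omega)
      omega
    | n+2 =>
      have e1 := hget n (by omega)
      have e2 := hget (n+1) (by omega)
      have b : (opS α β).getD (n+2+1) 0 = (opS α β).getD (n+1+2) 0 := by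
        rw [show n+2+1 = n+1+2 from by omega]
      have h1 := hαmono n (by omega)
      have h2 := hβmono (n+1) (by omega)
      omega
  · intro i hi
    rw [hlen] at hi
    match i with
    | 0 =>
      have h1 : (opS α β).getD (0+1) 0 = 1 := by simp [opS]
      omega
    | n+1 =>
      have e1 := hget n (by omega)
      have b : (opS α β).getD (n+1+1) 0 = (opS α β).getD (n+2) 0 := by
        rw [show n+1+1 = n+2 from by omega]
      omega
  · intro i hi
    rw [hlen] at hi
    match i with
    | 0 =>
      have e := hget 0 (by omega)
      have h1 : (opS α β).getD (0+1) 0 = 1 := by simp [opS]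
      have b : (opS α β).getD (0+1+1) 0 = (opS α β).getD (0+2) 0 := by norm_num
      omega
    | n+1 =>
      have e1 := hget n (by omega)
      have e2 := hget (n+1) (by omega)
      have b1 : (opS α β).getD (n+1+1) 0 = (opS α β).getD (n+2) 0 := by
        rw [show n+1+1 = n+2 from by omega]
      have h1 := hαmono n (by omega)
      omega

lemma jinv_T {α β : List ℕ} (h : JInv α β) : JInv β (opT α β) := by
  obtain ⟨hlen, hβpos, hβmono, hβhead, hαmono, hdom, hgap⟩ := h
  have hb0 := head_eq_one hβhead
  have hlenT : (opT α β).length = α.length + 2 := by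
    simp [opT, List.length_zipWith, List.length_tail]; omega
  have hget : ∀ i, i < α.length →
      (opT α β).getD (i+2) 0 = 2 * β.getD (i+1) 0 - α.getD i 0 := by
    intro i hi
    show (1 :: 1 :: List.zipWith (fun a b => 2*b - a) α β.tail).getD (i+1+1) 0 = _
    rw [List.getD_cons_succ, List.getD_cons_succ, getD_zip _ _ _ hlen i hi]
  refine ⟨by omega, ?_, ?_, by simp [opT], hβmono, ?_, ?_⟩
  · intro i hi
    rw [hlenT] at hi
    match i with
    | 0 => simp [opT]
    | 1 => simp [opT]
    | n+2 =>
      rw [hget n (by omega)]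
      have h1 := hβpos (n+1) (by omega)
      have h2 := hdom n (by omega)
      omega
  · intro i hi
    rw [hlenT] at hi
    match i with
    | 0 => simp [opT]
    | 1 =>
      have e := hget 0 (by omega)
      have b : (opT α β).getD (1+1) 0 = (opT α β).getD (0+2) 0 := by norm_num
      have h1 : (opT α β).getD 1 0 = 1 := by simp [opT]
      have b2 : β.getD (0+1) 0 = β.getD 1 0 := by norm_num
      have h2 := hβpos 1 (by omega)
      have h3 := hdom 0 (by omega)
      omega
    | n+2 =>
      have e1 := hget n (by omega)
      have e2 := hget (n+1) (by omega)
      have b : (opT α β).getD (n+2+1) 0 = (opT α β).getD (n+1+2) 0 := by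
        rw [show n+2+1 = n+1+2 from by omega]
      have b2 : β.getD (n+1+1) 0 = β.getD (n+2) 0 := by
        rw [show n+1+1 = n+2 from by omega]
      have h1 := hdom n (by omega)
      have h2 := hdom (n+1) (by omega)
      have h3 := hgap n (by omega)
      have h4 := hβmono (n+1) (by omega)
      omega
  · intro i hi
    rw [hlen] at hi
    match i with
    | 0 =>
      have h1 : (opT α β).getD (0+1) 0 = 1 := by simp [opT]
      omega
    | n+1 =>
      have e1 := hget n (by omega)
      have b : (opT α β).getD (n+1+1) 0 = (opT α β).getD (n+2) 0 := by
        rw [show n+1+1 = n+2 from by omega]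
      have h1 := hdom n (by omega)
      omega
  · intro i hi
    rw [hlen] at hi
    match i with
    | 0 =>
      have e := hget 0 (by omega)
      have h1 : (opT α β).getD (0+1) 0 = 1 := by simp [opT]
      have b : (opT α β).getD (0+1+1) 0 = (opT α β).getD (0+2) 0 := by norm_num
      have h2 := hdom 0 (by omega)
      have h3 := hβmono 0 (by omega)
      omega
    | n+1 =>
      have e1 := hget n (by omega)
      have e2 := hget (n+1) (by omega)
      have b1 : (opT α β).getD (n+1+1) 0 = (opT α β).getD (n+2) 0 := by
        rw [show n+1+1 = n+2 from by omega]
      have b2 : β.getD (n+1+1) 0 = β.getD (n+2) 0 := by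
        rw [show n+1+1 = n+2 from by omega]
      have h1 := hdom n (by omega)
      have h2 := hdom (n+1) (by omega)
      have h3 := hgap n (by omega)
      omega

lemma jinv_fold (w : List Letter) : ∀ p : List ℕ × List ℕ, JInv p.1 p.2 →
    JInv (w.foldl step p).1 (w.foldl step p).2 := by
  induction w with
  | nil => intro p hp; exact hp
  | cons a w ih =>
    intro p hp
    simp only [List.foldl_cons]
    apply ih
    cases a with
    | G => exact jinv_G hp
    | S => exact jinv_S hp
    | T => exact jinv_T hp

lemma jinv_init : JInv [1] [1, 1] := by
  refine ⟨rfl, ?_, ?_, rfl, ?_, ?_, ?_⟩ <;>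
    · intro i hi
      simp only [List.length_cons, List.length_nil] at hi
      match i, hi with
      | 0, h => first | (simp; done) | omega
      | 1, h => first | (simp; done) | omega
      | n+2, h => omega

/-- Every derived vector produced by Jean's recursion from an admissible word
(`GG…`, no factor `GT`) is a non-decreasing sequence of positive integers
beginning with 1. -/
theorem derived_vector_monotone_pos (w : List Letter)
    (hadm : (Letter.G :: Letter.G :: w).Chain'
      (fun a b => ¬(a = Letter.G ∧ b = Letter.T))) :
    (w.foldl step ([1], [1, 1])).2.Chain' (· ≤ ·) ∧
    (∀ x ∈ (w.foldl step ([1], [1, 1])).2, 0 < x) ∧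
    (w.foldl step ([1], [1, 1])).2.head? = some 1 := by
  have h := jinv_fold w ([1], [1, 1]) jinv_init
  refine ⟨?_, ?_, h.hβhead⟩
  · unfold List.Chain'; rw [List.isChain_iff_getElem]
    intro i hi
    have hm := h.hβmono i (by omega)
    rw [List.getD_eq_getElem _ _ (by omega), List.getD_eq_getElem _ _ (by omega)] at hm
    simpa [List.get_eq_getElem] using hm
  · intro x hx
    obtain ⟨⟨i, hi⟩, rfl⟩ := List.mem_iff_get.mp hx
    have hp := h.hβpos i hi
    rw [List.getD_eq_getElem _ _ hi] at hp
    simpa [List.get_eq_getElem] using hp
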